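/- arXiv:1703.06183 — 3 statements merged into one kernel-verified Lean document; each statement's English description precedes it below -/
import Mathlib

section
/- Let H = ℂ^a ⊗ ℂ^b, let ψ ∈ H be a unit vector, and let E(ρ) = ∑_i (M_i ⊗ I_b) ρ (M_i ⊗ I_b)† be a CPTP map whose Kraus operators act only on the first tensor factor (∑_i (M_i ⊗ I_b)†(M_i ⊗ I_b) = I) and which leaves the target invariant: E(|ψ⟩⟨ψ|) = |ψ⟩⟨ψ|. Let Π = Π_A ⊗ I_b, where Π_A is the orthogonal projection of ℂ^a onto the range of Tr_B(|ψ⟩⟨ψ|). Then for every a·b × a·b matrix ρ: Π E(ρ) Π = Π ρ Π + Π σ Π, where σ = E((I − Π) ρ (I − Π)); moreover σ is positive semidefinite whenever ρ is. -/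
open scoped BigOperators Matrix Kronecker ComplexOrder

open Matrix

namespace Stab

/-- Partial trace over the second tensor factor. -/
noncomputable def ptraceB {a b : ℕ} (M : Matrix (Fin a × Fin b) (Fin a × Fin b) ℂ) :
    Matrix (Fin a) (Fin a) ℂ :=
  fun i i' => ∑ j, M (i, j) (i', j)

/-- The rank-one projector `|ψ⟩⟨ψ|`. -/
noncomputable def proj {ι : Type*} (ψ : ι → ℂ) : Matrix ι ι ℂ :=
  fun x y => ψ x * (starRingEnd ℂ) (ψ y)

/-- `P` is the orthogonal projection matrix onto the subspace `V`. -/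
def IsOrthProjOnto {ι : Type*} [Fintype ι] [DecidableEq ι]
    (P : Matrix ι ι ℂ) (V : Submodule ℂ (ι → ℂ)) : Prop :=
  Pᴴ = P ∧ P * P = P ∧ LinearMap.range P.mulVecLin = V

lemma proj_mul_conj {n m : Type*} [Fintype n] (K : Matrix m n ℂ) (ψ : n → ℂ) :
    K * proj ψ * Kᴴ = proj (K.mulVec ψ) := by
  ext x y
  simp only [proj, Matrix.mul_apply, Matrix.conjTranspose_apply, Matrix.mulVec,
    dotProduct]
  rw [_root_.map_sum, Finset.mul_sum]
  refine Finset.sum_congr rfl fun j _ => ?_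
  rw [_root_.map_mul, Finset.sum_mul, Finset.sum_mul]
  refine Finset.sum_congr rfl fun k _ => ?_
  simp only [Complex.star_def]
  ring

lemma proj_quad {n : Type*} [Fintype n] (w v : n → ℂ) :
    star v ⬝ᵥ (proj w).mulVec v = (star v ⬝ᵥ w) * (starRingEnd ℂ) (star v ⬝ᵥ w) := by
  simp only [proj, Matrix.mulVec, dotProduct, Pi.star_apply, Complex.star_def]
  rw [_root_.map_sum]
  simp only [Finset.mul_sum]
  rw [Finset.sum_comm]
  refine Finset.sum_congr rfl fun y _ => ?_
  rw [Finset.sum_mul]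
  refine Finset.sum_congr rfl fun x _ => ?_
  simp only [_root_.map_mul, Complex.conj_conj]
  ring

lemma kron_one_conjT {a b : ℕ} (A : Matrix (Fin a) (Fin a) ℂ) :
    (A ⊗ₖ (1 : Matrix (Fin b) (Fin b) ℂ))ᴴ = Aᴴ ⊗ₖ 1 := by
  ext ⟨x, j⟩ ⟨y, l⟩
  by_cases h : j = l
  · subst h; simp [Matrix.one_apply]
  · simp [Matrix.one_apply, h, Ne.symm h]

lemma sum_kron_one {a b m : ℕ} (A : Fin m → Matrix (Fin a) (Fin a) ℂ) :
    (∑ i, A i) ⊗ₖ (1 : Matrix (Fin b) (Fin b) ℂ) = ∑ i, A i ⊗ₖ 1 := by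
  ext ⟨x, j⟩ ⟨y, l⟩
  simp [Matrix.kroneckerMap_apply, Matrix.sum_apply, Finset.sum_mul]

lemma kron_one_mulVec {a b : ℕ} (A : Matrix (Fin a) (Fin a) ℂ) (ψ : Fin a × Fin b → ℂ)
    (x : Fin a) (j : Fin b) :
    ((A ⊗ₖ (1 : Matrix (Fin b) (Fin b) ℂ)).mulVec ψ) (x, j) = ∑ z, A x z * ψ (z, j) := by
  simp only [Matrix.mulVec, dotProduct, Fintype.sum_prod_type,
    Matrix.kroneckerMap_apply, Matrix.one_apply]
  refine Finset.sum_congr rfl fun z _ => ?_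
  rw [Finset.sum_eq_single j] <;> simp +contextual [eq_comm]

lemma dot_mulVec_sum {n k : Type*} [Fintype n] [Fintype k] (v : n → ℂ)
    (A : k → Matrix n n ℂ) :
    star v ⬝ᵥ (∑ i, A i).mulVec v = ∑ i, star v ⬝ᵥ (A i).mulVec v := by
  have h1 : ∀ x, ((∑ i, A i).mulVec v) x = ∑ i, ((A i).mulVec v) x := by
    intro x
    simp only [Matrix.mulVec, dotProduct, Matrix.sum_apply, Finset.sum_mul]
    exact Finset.sum_comm
  simp only [dotProduct, h1, Finset.mul_sum]
  exact Finset.sum_comm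

/-- Lemma 2, structure of invariance-obeying local maps: let
`E(ρ) = ∑ᵢ (Mᵢ ⊗ I) ρ (Mᵢ ⊗ I)†` be a CPTP map acting only on the first factor of
`ℂ^a ⊗ ℂ^b` which leaves `|ψ⟩⟨ψ|` invariant, and let `Pr = Π_A ⊗ I` with `Pr_A` the
orthogonal projection onto the range of `Tr_B |ψ⟩⟨ψ|`. Then
`Pr E(ρ) Π = Π ρ Π + Π σ Π` where `σ = E((1-Π) ρ (1-Π))`, and `σ` is positive
semidefinite whenever `ρ` is. -/
theorem local_invariant_map_structure {a b : ℕ}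
    (ψ : Fin a × Fin b → ℂ) (hψ : ∑ x, Complex.normSq (ψ x) = 1)
    (m : ℕ) (M : Fin m → Matrix (Fin a) (Fin a) ℂ)
    (E : Matrix (Fin a × Fin b) (Fin a × Fin b) ℂ →
         Matrix (Fin a × Fin b) (Fin a × Fin b) ℂ)
    (hE : ∀ ρ, E ρ = ∑ i, (M i ⊗ₖ (1 : Matrix (Fin b) (Fin b) ℂ)) * ρ *
        (M i ⊗ₖ (1 : Matrix (Fin b) (Fin b) ℂ))ᴴ)
    (htp : ∑ i, (M i ⊗ₖ (1 : Matrix (Fin b) (Fin b) ℂ))ᴴ *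
        (M i ⊗ₖ (1 : Matrix (Fin b) (Fin b) ℂ)) = 1)
    (hinv : E (proj ψ) = proj ψ)
    (PA : Matrix (Fin a) (Fin a) ℂ)
    (hPA : IsOrthProjOnto PA (LinearMap.range (ptraceB (proj ψ)).mulVecLin)) :
    ∀ ρ : Matrix (Fin a × Fin b) (Fin a × Fin b) ℂ,
      (PA ⊗ₖ (1 : Matrix (Fin b) (Fin b) ℂ)) * E ρ * (PA ⊗ₖ 1) =
        (PA ⊗ₖ 1) * ρ * (PA ⊗ₖ 1) +
        (PA ⊗ₖ 1) * E ((1 - PA ⊗ₖ 1) * ρ * (1 - PA ⊗ₖ 1)) * (PA ⊗ₖ 1) ∧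
      (ρ.PosSemidef → (E ((1 - PA ⊗ₖ 1) * ρ * (1 - PA ⊗ₖ 1))).PosSemidef) := by
  obtain ⟨hPAh, hPAidem, hPArange⟩ := hPA
  -- nonemptiness of the index types
  have hne : Nonempty (Fin a × Fin b) := by
    by_contra h
    rw [not_nonempty_iff] at h
    rw [Finset.univ_eq_empty, Finset.sum_empty] at hψ
    exact one_ne_zero hψ.symm
  obtain ⟨⟨x0, j0⟩⟩ := hne
  -- basic objects
  set w : Fin m → (Fin a × Fin b → ℂ) :=
    fun i => (M i ⊗ₖ (1 : Matrix (Fin b) (Fin b) ℂ)).mulVec ψ with hw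
  set lam : Fin m → ℂ := fun i => star ψ ⬝ᵥ w i with hlam
  have hψψ : star ψ ⬝ᵥ ψ = 1 := by
    have h1 : ∀ x, (star ψ) x * ψ x = (Complex.normSq (ψ x) : ℂ) := fun x => by
      rw [Pi.star_apply, Complex.star_def, mul_comm, Complex.mul_conj]
    simp only [dotProduct, h1, ← Complex.ofReal_sum, hψ, Complex.ofReal_one]
  have hEw : proj ψ = ∑ i, proj (w i) := by
    have h1 := hinv
    rw [hE] at h1
    calc proj ψ = ∑ i, (M i ⊗ₖ (1 : Matrix (Fin b) (Fin b) ℂ)) * proj ψ *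
        (M i ⊗ₖ (1 : Matrix (Fin b) (Fin b) ℂ))ᴴ := h1.symm
      _ = ∑ i, proj (w i) := Finset.sum_congr rfl fun i _ => proj_mul_conj _ _
  -- each Kraus operator fixes ψ up to scalar
  have hwlam : ∀ i, w i = lam i • ψ := by
    intro i
    set v : Fin a × Fin b → ℂ := w i - lam i • ψ with hv
    have hψv : star ψ ⬝ᵥ v = 0 := by
      rw [hv, dotProduct_sub, dotProduct_smul, hψψ, hlam]
      simp
    have hvψ : star v ⬝ᵥ ψ = 0 := by
      rw [star_dotProduct, hψv, star_zero]
    have h0 : (0 : ℂ) = ∑ j, (Complex.normSq (star v ⬝ᵥ w j) : ℂ) := by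
      have hl : star v ⬝ᵥ (proj ψ).mulVec v = 0 := by
        rw [proj_quad, hvψ, zero_mul]
      calc (0 : ℂ) = star v ⬝ᵥ (proj ψ).mulVec v := hl.symm
        _ = ∑ j, star v ⬝ᵥ (proj (w j)).mulVec v := by
            rw [hEw, dot_mulVec_sum]
        _ = ∑ j, (Complex.normSq (star v ⬝ᵥ w j) : ℂ) := by
            refine Finset.sum_congr rfl fun j _ => ?_
            rw [proj_quad, Complex.mul_conj]
    have hr : ∑ j, Complex.normSq (star v ⬝ᵥ w j) = 0 := by exact_mod_cast h0.symm
    have hvw : star v ⬝ᵥ w i = 0 := by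
      have := (Finset.sum_eq_zero_iff_of_nonneg
        (fun j _ => Complex.normSq_nonneg _)).mp hr i (Finset.mem_univ i)
      exact Complex.normSq_eq_zero.mp this
    have hvv : star v ⬝ᵥ v = 0 := by
      nth_rewrite 2 [hv]
      rw [dotProduct_sub, dotProduct_smul, hvw, hvψ]
      simp
    have hv0 : v = 0 := dotProduct_star_self_eq_zero.mp hvv
    have := hv
    rw [hv0] at this
    exact (sub_eq_zero.mp this.symm)
  -- componentwise action on the slices of ψ
  have hMcol : ∀ i (j : Fin b) (x : Fin a), ∑ z, M i x z * ψ (z, j) = lam i * ψ (x, j) := by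
    intro i j x
    have h1 := congrFun (hwlam i) (x, j)
    rw [hw] at h1
    simp only [kron_one_mulVec] at h1
    simpa using h1
  -- (M i - lam i) kills the reduced state
  have hNσ : ∀ i, (M i - lam i • 1) * ptraceB (proj ψ) = 0 := by
    intro i
    ext x y
    rw [Matrix.mul_apply, Matrix.zero_apply]
    simp only [ptraceB, proj, Finset.mul_sum]
    rw [Finset.sum_comm]
    refine Finset.sum_eq_zero fun j _ => ?_
    have h1 : ∑ z, (M i - lam i • 1) x z * ψ (z, j) = 0 := by
      simp only [Matrix.sub_apply, Matrix.smul_apply, Matrix.one_apply, smul_eq_mul, sub_mul]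
      rw [Finset.sum_sub_distrib, hMcol i j x]
      simp [mul_ite, ite_mul, Finset.sum_ite_eq, Finset.mem_univ]
    calc ∑ z, (M i - lam i • 1) x z * (ψ (z, j) * (starRingEnd ℂ) (ψ (y, j)))
        = (∑ z, (M i - lam i • 1) x z * ψ (z, j)) * (starRingEnd ℂ) (ψ (y, j)) := by
          rw [Finset.sum_mul]
          exact Finset.sum_congr rfl fun z _ => by ring
      _ = 0 := by rw [h1, zero_mul]
  -- hence kills PA
  have hNPA : ∀ i, (M i - lam i • 1) * PA = 0 := by
    intro i
    ext x k
    have hcol : (fun z => PA z k) ∈ LinearMap.range (ptraceB (proj ψ)).mulVecLin := by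
      rw [← hPArange]
      exact ⟨Pi.single k 1, by rw [Matrix.mulVecLin_apply, Matrix.mulVec_single]; simp; rfl⟩
    obtain ⟨u, hu⟩ := hcol
    rw [Matrix.mulVecLin_apply] at hu
    have h2 : (M i - lam i • 1).mulVec (fun z => PA z k) = 0 := by
      rw [← hu, Matrix.mulVec_mulVec, hNσ i, Matrix.zero_mulVec]
    have h3 := congrFun h2 x
    simpa [Matrix.mul_apply, Matrix.mulVec, dotProduct] using h3
  have hMPA : ∀ i, M i * PA = lam i • PA := by
    intro i
    have h1 := hNPA i
    rwa [sub_mul, smul_mul_assoc, one_mul, sub_eq_zero] at h1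
  have hPAMH : ∀ i, PA * (M i)ᴴ = star (lam i) • PA := by
    intro i
    have h1 := congrArg Matrix.conjTranspose (hMPA i)
    rwa [Matrix.conjTranspose_mul, hPAh, Matrix.conjTranspose_smul, hPAh] at h1
  -- trace preservation on the first factor
  have hA1 : ∑ i, (M i)ᴴ * M i = 1 := by
    have h := htp
    have hk : ∀ i ∈ Finset.univ, (M i ⊗ₖ (1 : Matrix (Fin b) (Fin b) ℂ))ᴴ *
        (M i ⊗ₖ (1 : Matrix (Fin b) (Fin b) ℂ)) = ((M i)ᴴ * M i) ⊗ₖ 1 := fun i _ => by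
      rw [kron_one_conjT, ← Matrix.mul_kronecker_mul, one_mul]
    rw [Finset.sum_congr rfl hk, ← sum_kron_one] at h
    ext x y
    have h2 := congrFun (congrFun h (x, j0)) (y, j0)
    simpa [Matrix.kroneckerMap_apply, Matrix.one_apply, Prod.ext_iff] using h2
  -- the key algebraic identity on the first factor
  have hPAsum : ∑ i, star (lam i) • (PA * M i) = PA := by
    calc ∑ i, star (lam i) • (PA * M i)
        = ∑ i, PA * ((M i)ᴴ * M i) := by
          refine Finset.sum_congr rfl fun i _ => ?_
          rw [← mul_assoc, hPAMH i, smul_mul_assoc]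
      _ = PA * ∑ i, (M i)ᴴ * M i := by rw [Finset.mul_sum]
      _ = PA := by rw [hA1, mul_one]
  -- PA is nonzero and the weights sum to 1
  have htr : ∑ x, ptraceB (proj ψ) x x = 1 := by
    have h1 : ∀ p : Fin a × Fin b, ψ p * (starRingEnd ℂ) (ψ p) = (Complex.normSq (ψ p) : ℂ) :=
      fun p => Complex.mul_conj _
    simp only [ptraceB, proj, h1, ← Complex.ofReal_sum]
    have h2 : ∑ i : Fin a, ∑ j : Fin b, Complex.normSq (ψ (i, j)) = 1 := by
      rw [← hψ]; exact (Fintype.sum_prod_type fun p => Complex.normSq (ψ p)).symm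
    rw [h2, Complex.ofReal_one]
  have hσne : ∃ x1, ptraceB (proj ψ) x1 x1 ≠ 0 := by
    by_contra h
    push_neg at h
    rw [Finset.sum_eq_zero (fun x _ => h x)] at htr
    exact one_ne_zero htr.symm
  obtain ⟨x1, hx1⟩ := hσne
  have hPAne : PA ≠ 0 := by
    intro h0
    have hcol : (fun z => ptraceB (proj ψ) z x1) ∈ LinearMap.range PA.mulVecLin := by
      rw [hPArange]
      exact ⟨Pi.single x1 1, by rw [Matrix.mulVecLin_apply, Matrix.mulVec_single]; simp; rfl⟩
    obtain ⟨u, hu⟩ := hcol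
    rw [Matrix.mulVecLin_apply, h0, Matrix.zero_mulVec] at hu
    exact hx1 (congrFun hu.symm x1)
  have hc : (∑ i, star (lam i) * lam i) = 1 := by
    have hcPA : (∑ i, star (lam i) * lam i) • PA = PA := by
      calc (∑ i, star (lam i) * lam i) • PA
          = ∑ i, (star (lam i) * lam i) • PA := Finset.sum_smul
        _ = ∑ i, (star (lam i) • (PA * M i)) * PA := by
            refine Finset.sum_congr rfl fun i _ => ?_
            rw [smul_mul_assoc, mul_assoc, hMPA i, mul_smul_comm, hPAidem, smul_smul]
        _ = (∑ i, star (lam i) • (PA * M i)) * PA := by rw [Finset.sum_mul]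
        _ = PA * PA := by rw [hPAsum]
        _ = PA := hPAidem
    by_contra hc'
    have h1 : ((∑ i, star (lam i) * lam i) - 1) • PA = 0 := by
      rw [sub_smul, one_smul, hcPA, sub_self]
    rcases smul_eq_zero.mp h1 with h | h
    · exact hc' (by rwa [sub_eq_zero] at h)
    · exact hPAne h
  -- tensored versions
  set P : Matrix (Fin a × Fin b) (Fin a × Fin b) ℂ :=
    PA ⊗ₖ (1 : Matrix (Fin b) (Fin b) ℂ) with hPdef
  have hPh : Pᴴ = P := by rw [hPdef, kron_one_conjT, hPAh]
  have hPP : P * P = P := by rw [hPdef, ← Matrix.mul_kronecker_mul, hPAidem, one_mul]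
  have hKP : ∀ i, (M i ⊗ₖ (1 : Matrix (Fin b) (Fin b) ℂ)) * P = lam i • P := by
    intro i
    rw [hPdef, ← Matrix.mul_kronecker_mul, one_mul, hMPA i, Matrix.smul_kronecker]
  have hPKH : ∀ i, P * (M i ⊗ₖ (1 : Matrix (Fin b) (Fin b) ℂ))ᴴ = star (lam i) • P := by
    intro i
    rw [kron_one_conjT, hPdef, ← Matrix.mul_kronecker_mul, one_mul, hPAMH i,
      Matrix.smul_kronecker]
  have hPKsum : ∑ i, star (lam i) • (P * (M i ⊗ₖ (1 : Matrix (Fin b) (Fin b) ℂ))) = P := by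
    calc ∑ i, star (lam i) • (P * (M i ⊗ₖ (1 : Matrix (Fin b) (Fin b) ℂ)))
        = ∑ i, (star (lam i) • (PA * M i)) ⊗ₖ (1 : Matrix (Fin b) (Fin b) ℂ) := by
          refine Finset.sum_congr rfl fun i _ => ?_
          rw [hPdef, ← Matrix.mul_kronecker_mul, one_mul, Matrix.smul_kronecker]
      _ = (∑ i, star (lam i) • (PA * M i)) ⊗ₖ 1 := (sum_kron_one _).symm
      _ = P := by rw [hPAsum, hPdef]
  have hKHPsum : ∑ i, lam i • ((M i ⊗ₖ (1 : Matrix (Fin b) (Fin b) ℂ))ᴴ * P) = P := by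
    calc ∑ i, lam i • ((M i ⊗ₖ (1 : Matrix (Fin b) (Fin b) ℂ))ᴴ * P)
        = ∑ i, (star (lam i) • (P * (M i ⊗ₖ (1 : Matrix (Fin b) (Fin b) ℂ))))ᴴ := by
          refine Finset.sum_congr rfl fun i _ => ?_
          rw [Matrix.conjTranspose_smul, Matrix.conjTranspose_mul, hPh, star_star]
      _ = (∑ i, star (lam i) • (P * (M i ⊗ₖ (1 : Matrix (Fin b) (Fin b) ℂ))))ᴴ :=
          (Matrix.conjTranspose_sum _ _).symm
      _ = Pᴴ := by rw [hPKsum]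
      _ = P := hPh
  intro ρ
  set Q : Matrix (Fin a × Fin b) (Fin a × Fin b) ℂ := 1 - P with hQdef
  have hQP : Q * P = 0 := by rw [hQdef, sub_mul, one_mul, hPP, sub_self]
  have hPQ : P * Q = 0 := by rw [hQdef, mul_sub, mul_one, hPP, sub_self]
  have hPKP : ∀ i, P * (M i ⊗ₖ (1 : Matrix (Fin b) (Fin b) ℂ)) * P = lam i • P := by
    intro i
    rw [mul_assoc, hKP i, mul_smul_comm, hPP]
  have hPKHP : ∀ i, P * (M i ⊗ₖ (1 : Matrix (Fin b) (Fin b) ℂ))ᴴ * P = star (lam i) • P := by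
    intro i
    rw [hPKH i, smul_mul_assoc, hPP]
  constructor
  · -- the structural identity
    have hrho : ρ = P * ρ * P + P * ρ * Q + Q * ρ * P + Q * ρ * Q := by
      rw [hQdef]; noncomm_ring
    calc P * E ρ * P
        = ∑ i, P * ((M i ⊗ₖ (1 : Matrix (Fin b) (Fin b) ℂ)) * ρ *
            (M i ⊗ₖ (1 : Matrix (Fin b) (Fin b) ℂ))ᴴ) * P := by
          rw [hE ρ, Finset.mul_sum, Finset.sum_mul]
      _ = ∑ i, (P * ((M i ⊗ₖ (1 : Matrix (Fin b) (Fin b) ℂ)) * (P * ρ * P) *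
              (M i ⊗ₖ (1 : Matrix (Fin b) (Fin b) ℂ))ᴴ) * P +
            P * ((M i ⊗ₖ (1 : Matrix (Fin b) (Fin b) ℂ)) * (P * ρ * Q) *
              (M i ⊗ₖ (1 : Matrix (Fin b) (Fin b) ℂ))ᴴ) * P +
            P * ((M i ⊗ₖ (1 : Matrix (Fin b) (Fin b) ℂ)) * (Q * ρ * P) *
              (M i ⊗ₖ (1 : Matrix (Fin b) (Fin b) ℂ))ᴴ) * P +
            P * ((M i ⊗ₖ (1 : Matrix (Fin b) (Fin b) ℂ)) * (Q * ρ * Q) *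
              (M i ⊗ₖ (1 : Matrix (Fin b) (Fin b) ℂ))ᴴ) * P) := by
          refine Finset.sum_congr rfl fun i _ => ?_
          conv_lhs => rw [hrho]
          noncomm_ring
      _ = P * ρ * P + P * E ((1 - P) * ρ * (1 - P)) * P := by
          rw [Finset.sum_add_distrib, Finset.sum_add_distrib, Finset.sum_add_distrib]
          have hT1 : ∑ i, P * ((M i ⊗ₖ (1 : Matrix (Fin b) (Fin b) ℂ)) * (P * ρ * P) *
              (M i ⊗ₖ (1 : Matrix (Fin b) (Fin b) ℂ))ᴴ) * P = P * ρ * P := by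
            calc ∑ i, P * ((M i ⊗ₖ (1 : Matrix (Fin b) (Fin b) ℂ)) * (P * ρ * P) *
                (M i ⊗ₖ (1 : Matrix (Fin b) (Fin b) ℂ))ᴴ) * P
                = ∑ i, (star (lam i) * lam i) • (P * ρ * P) := by
                  refine Finset.sum_congr rfl fun i _ => ?_
                  calc P * ((M i ⊗ₖ (1 : Matrix (Fin b) (Fin b) ℂ)) * (P * ρ * P) *
                      (M i ⊗ₖ (1 : Matrix (Fin b) (Fin b) ℂ))ᴴ) * P
                      = (P * (M i ⊗ₖ (1 : Matrix (Fin b) (Fin b) ℂ)) * P) * ρ *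
                        (P * (M i ⊗ₖ (1 : Matrix (Fin b) (Fin b) ℂ))ᴴ * P) := by
                        noncomm_ring
                    _ = (lam i • P) * ρ * (star (lam i) • P) := by rw [hPKP i, hPKHP i]
                    _ = (star (lam i) * lam i) • (P * ρ * P) := by
                        rw [smul_mul_assoc, smul_mul_assoc, mul_smul_comm, smul_smul,
                          mul_comm (lam i) (star (lam i))]
              _ = (∑ i, star (lam i) * lam i) • (P * ρ * P) := by rw [Finset.sum_smul]
              _ = P * ρ * P := by rw [hc, one_smul]
          have hT2 : ∑ i, P * ((M i ⊗ₖ (1 : Matrix (Fin b) (Fin b) ℂ)) * (P * ρ * Q) *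
              (M i ⊗ₖ (1 : Matrix (Fin b) (Fin b) ℂ))ᴴ) * P = 0 := by
            calc ∑ i, P * ((M i ⊗ₖ (1 : Matrix (Fin b) (Fin b) ℂ)) * (P * ρ * Q) *
                (M i ⊗ₖ (1 : Matrix (Fin b) (Fin b) ℂ))ᴴ) * P
                = ∑ i, (P * ρ * Q) * (lam i • ((M i ⊗ₖ (1 : Matrix (Fin b) (Fin b) ℂ))ᴴ * P)) := by
                  refine Finset.sum_congr rfl fun i _ => ?_
                  calc P * ((M i ⊗ₖ (1 : Matrix (Fin b) (Fin b) ℂ)) * (P * ρ * Q) *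
                      (M i ⊗ₖ (1 : Matrix (Fin b) (Fin b) ℂ))ᴴ) * P
                      = (P * (M i ⊗ₖ (1 : Matrix (Fin b) (Fin b) ℂ)) * P) *
                        (ρ * Q * ((M i ⊗ₖ (1 : Matrix (Fin b) (Fin b) ℂ))ᴴ * P)) := by
                        noncomm_ring
                    _ = (lam i • P) *
                        (ρ * Q * ((M i ⊗ₖ (1 : Matrix (Fin b) (Fin b) ℂ))ᴴ * P)) := by
                        rw [hPKP i]
                    _ = (P * ρ * Q) *
                        (lam i • ((M i ⊗ₖ (1 : Matrix (Fin b) (Fin b) ℂ))ᴴ * P)) := by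
                        simp only [smul_mul_assoc, mul_smul_comm, mul_assoc]
              _ = (P * ρ * Q) *
                  (∑ i, lam i • ((M i ⊗ₖ (1 : Matrix (Fin b) (Fin b) ℂ))ᴴ * P)) := by
                  rw [Finset.mul_sum]
              _ = (P * ρ * Q) * P := by rw [hKHPsum]
              _ = 0 := by rw [mul_assoc, hQP, mul_zero]
          have hT3 : ∑ i, P * ((M i ⊗ₖ (1 : Matrix (Fin b) (Fin b) ℂ)) * (Q * ρ * P) *
              (M i ⊗ₖ (1 : Matrix (Fin b) (Fin b) ℂ))ᴴ) * P = 0 := by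
            calc ∑ i, P * ((M i ⊗ₖ (1 : Matrix (Fin b) (Fin b) ℂ)) * (Q * ρ * P) *
                (M i ⊗ₖ (1 : Matrix (Fin b) (Fin b) ℂ))ᴴ) * P
                = ∑ i, (star (lam i) • (P * (M i ⊗ₖ (1 : Matrix (Fin b) (Fin b) ℂ)))) *
                    (Q * ρ * P) := by
                  refine Finset.sum_congr rfl fun i _ => ?_
                  calc P * ((M i ⊗ₖ (1 : Matrix (Fin b) (Fin b) ℂ)) * (Q * ρ * P) *
                      (M i ⊗ₖ (1 : Matrix (Fin b) (Fin b) ℂ))ᴴ) * P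
                      = (P * (M i ⊗ₖ (1 : Matrix (Fin b) (Fin b) ℂ))) * (Q * ρ) *
                        (P * (M i ⊗ₖ (1 : Matrix (Fin b) (Fin b) ℂ))ᴴ * P) := by
                        noncomm_ring
                    _ = (P * (M i ⊗ₖ (1 : Matrix (Fin b) (Fin b) ℂ))) * (Q * ρ) *
                        (star (lam i) • P) := by rw [hPKHP i]
                    _ = (star (lam i) • (P * (M i ⊗ₖ (1 : Matrix (Fin b) (Fin b) ℂ)))) *
                        (Q * ρ * P) := by
                        simp only [smul_mul_assoc, mul_smul_comm, mul_assoc]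
              _ = (∑ i, star (lam i) • (P * (M i ⊗ₖ (1 : Matrix (Fin b) (Fin b) ℂ)))) *
                  (Q * ρ * P) := by rw [Finset.sum_mul]
              _ = P * (Q * ρ * P) := by rw [hPKsum]
              _ = 0 := by
                  simp only [← mul_assoc]
                  rw [hPQ, zero_mul, zero_mul]
          have hT4 : ∑ i, P * ((M i ⊗ₖ (1 : Matrix (Fin b) (Fin b) ℂ)) * (Q * ρ * Q) *
              (M i ⊗ₖ (1 : Matrix (Fin b) (Fin b) ℂ))ᴴ) * P
              = P * E ((1 - P) * ρ * (1 - P)) * P := by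
            rw [← hQdef, hE (Q * ρ * Q), Finset.mul_sum, Finset.sum_mul]
          rw [hT1, hT2, hT3, hT4, add_zero, add_zero]
  · -- positive semidefiniteness
    intro hρ
    have hQh : Qᴴ = Q := by
      rw [hQdef, Matrix.conjTranspose_sub, Matrix.conjTranspose_one, hPh]
    have h1 : ((1 - P) * ρ * (1 - P)).PosSemidef := by
      rw [← hQdef]
      have h2 := hρ.mul_mul_conjTranspose_same Q
      rwa [hQh] at h2
    rw [hE]
    exact Finset.sum_induction _ _ (fun A B hA hB => hA.add hB) Matrix.PosSemidef.zero
      (fun i _ => h1.mul_mul_conjTranspose_same _)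

end Stab
end

section
/- Let V₁ and V₂ be subspaces of a finite-dimensional complex inner product space, let Π₁ and Π₂ be the orthogonal projections onto V₁ and V₂ respectively, and let Π_{1∩2} be the orthogonal projection onto V₁ ∩ V₂. Then Tr(Π₁Π₂) ≥ Tr(Π_{1∩2}) + (1/2)·Tr([Π₁,Π₂]†[Π₁,Π₂]), where [Π₁,Π₂] = Π₁Π₂ − Π₂Π₁. -/
open LinearMap in
private lemma trace_adjoint_comp_self_re_nonneg
    {E : Type*} [NormedAddCommGroup E] [InnerProductSpace ℂ E] [FiniteDimensional ℂ E]
    (f : E →ₗ[ℂ] E) : 0 ≤ (LinearMap.trace ℂ E (adjoint f ∘ₗ f)).re := by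
  classical
  let b := stdOrthonormalBasis ℂ E
  rw [LinearMap.trace_eq_matrix_trace ℂ b.toBasis, Matrix.trace]
  have hdiag : ∀ i, (LinearMap.toMatrix b.toBasis b.toBasis (adjoint f ∘ₗ f)).diag i
      = inner ℂ (f (b i)) (f (b i)) := by
    intro i
    simp only [Matrix.diag, LinearMap.toMatrix_apply, OrthonormalBasis.coe_toBasis,
      LinearMap.comp_apply]
    rw [b.coe_toBasis_repr_apply, b.repr_apply_apply, LinearMap.adjoint_inner_right]
  rw [Complex.re_sum]
  apply Finset.sum_nonneg
  intro i _
  rw [hdiag i]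
  have := inner_self_nonneg (𝕜 := ℂ) (x := f (b i))
  simpa using this

open LinearMap in
/-- Lemma 3, trace inequality for projections: for orthogonal
projections `P₁`, `P₂`, `P₁₂` onto subspaces `V₁`, `V₂`, `V₁ ⊓ V₂` of a finite-dimensional
complex inner product space,
`Tr(P₁P₂) ≥ Tr(P₁₂) + (1/2)·Tr([P₁,P₂]†[P₁,P₂])`. -/
theorem trace_projection_commutator_inequality
    {E : Type*} [NormedAddCommGroup E] [InnerProductSpace ℂ E] [FiniteDimensional ℂ E]
    (V₁ V₂ : Submodule ℂ E) (P₁ P₂ P₁₂ : E →ₗ[ℂ] E)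
    (hP₁ : LinearMap.adjoint P₁ = P₁ ∧ P₁ ∘ₗ P₁ = P₁ ∧ LinearMap.range P₁ = V₁)
    (hP₂ : LinearMap.adjoint P₂ = P₂ ∧ P₂ ∘ₗ P₂ = P₂ ∧ LinearMap.range P₂ = V₂)
    (hP₁₂ : LinearMap.adjoint P₁₂ = P₁₂ ∧ P₁₂ ∘ₗ P₁₂ = P₁₂ ∧
      LinearMap.range P₁₂ = V₁ ⊓ V₂) :
    (LinearMap.trace ℂ E (P₁ ∘ₗ P₂)).re ≥
      (LinearMap.trace ℂ E P₁₂).re +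
      (1 / 2 : ℝ) * (LinearMap.trace ℂ E
        ((LinearMap.adjoint (P₁ ∘ₗ P₂ - P₂ ∘ₗ P₁)) ∘ₗ (P₁ ∘ₗ P₂ - P₂ ∘ₗ P₁))).re := by
  obtain ⟨h1a, h1i, h1r⟩ := hP₁
  obtain ⟨h2a, h2i, h2r⟩ := hP₂
  obtain ⟨h12a, h12i, h12r⟩ := hP₁₂
  have h1i' : P₁ * P₁ = P₁ := h1i
  have h2i' : P₂ * P₂ = P₂ := h2i
  have h12i' : P₁₂ * P₁₂ = P₁₂ := h12i
  have ha1 : ∀ f : E →ₗ[ℂ] E, P₁ * (P₁ * f) = P₁ * f := fun f => by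
    rw [← mul_assoc, h1i']
  have ha2 : ∀ f : E →ₗ[ℂ] E, P₂ * (P₂ * f) = P₂ * f := fun f => by
    rw [← mul_assoc, h2i']
  -- fixing lemmas
  have hfix₁ : ∀ x ∈ V₁, P₁ x = x := by
    intro x hx
    rw [← h1r] at hx
    obtain ⟨y, rfl⟩ := hx
    calc P₁ (P₁ y) = (P₁ ∘ₗ P₁) y := rfl
    _ = P₁ y := by rw [h1i]
  have hfix₂ : ∀ x ∈ V₂, P₂ x = x := by
    intro x hx
    rw [← h2r] at hx
    obtain ⟨y, rfl⟩ := hx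
    calc P₂ (P₂ y) = (P₂ ∘ₗ P₂) y := rfl
    _ = P₂ y := by rw [h2i]
  have hmem : ∀ x, P₁₂ x ∈ V₁ ⊓ V₂ := by
    intro x
    have : P₁₂ x ∈ LinearMap.range P₁₂ := ⟨x, rfl⟩
    rwa [h12r] at this
  have hc₁ : P₁ * P₁₂ = P₁₂ := by
    ext x
    exact hfix₁ (P₁₂ x) (hmem x).1
  have hc₂ : P₂ * P₁₂ = P₁₂ := by
    ext x
    exact hfix₂ (P₁₂ x) (hmem x).2
  set M : E →ₗ[ℂ] E := P₁ * P₂ * P₁ with hM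
  have hMa : LinearMap.adjoint M = M := by
    rw [hM]
    simp only [Module.End.mul_eq_comp, LinearMap.adjoint_comp, h1a, h2a]
    rw [LinearMap.comp_assoc]
  have hMc : M * P₁₂ = P₁₂ := by
    rw [hM, mul_assoc, mul_assoc, hc₁, hc₂, hc₁]
  have hcM : P₁₂ * M = P₁₂ := by
    have := congrArg LinearMap.adjoint hMc
    rwa [Module.End.mul_eq_comp, LinearMap.adjoint_comp, hMa, h12a,
      ← Module.End.mul_eq_comp] at this
  set D : E →ₗ[ℂ] E := M - P₁₂ with hD
  have hDa : LinearMap.adjoint D = D := by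
    rw [hD, map_sub, hMa, h12a]
  set T := LinearMap.trace ℂ E with hT
  -- trace of D†D
  have key : T (LinearMap.adjoint D * D) = T (M * M) - T P₁₂ := by
    rw [hDa, hD, sub_mul, mul_sub, mul_sub, hMc, hcM, h12i']
    simp only [map_sub]
    ring
  -- T(M*M) in canonical form
  have hMM : T (M * M) = T (P₁ * (P₂ * (P₁ * P₂))) := by
    rw [hM, hT]
    simp only [mul_assoc]
    rw [ha1 (P₂ * P₁), LinearMap.trace_mul_comm ℂ P₁ (P₂ * (P₁ * (P₂ * P₁)))]
    simp only [mul_assoc]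
    rw [h1i', LinearMap.trace_mul_comm ℂ P₂ (P₁ * (P₂ * P₁))]
    simp only [mul_assoc]
  -- cyclic trace identities
  have l1 : T (P₂ * (P₁ * P₂)) = T (P₁ * P₂) := by
    rw [hT, LinearMap.trace_mul_comm ℂ P₂ (P₁ * P₂), mul_assoc, h2i']
  have l2 : T (P₁ * (P₂ * P₁)) = T (P₁ * P₂) := by
    rw [hT, LinearMap.trace_mul_comm ℂ P₁ (P₂ * P₁), mul_assoc, h1i',
      LinearMap.trace_mul_comm ℂ P₂ P₁]
  have l3 : T (P₂ * (P₁ * (P₂ * P₁))) = T (P₁ * (P₂ * (P₁ * P₂))) := by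
    rw [hT, LinearMap.trace_mul_comm ℂ P₂ (P₁ * (P₂ * P₁))]
    simp only [mul_assoc]
  -- trace of C†C
  have hCa : LinearMap.adjoint (P₁ * P₂ - P₂ * P₁) = P₂ * P₁ - P₁ * P₂ := by
    simp only [Module.End.mul_eq_comp, map_sub, LinearMap.adjoint_comp, h1a, h2a]
  have hCC : T (LinearMap.adjoint (P₁ * P₂ - P₂ * P₁) * (P₁ * P₂ - P₂ * P₁)) =
      2 * T (P₁ * P₂) - 2 * T (P₁ * (P₂ * (P₁ * P₂))) := by
    rw [hCa, sub_mul, mul_sub, mul_sub]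
    simp only [map_sub, mul_assoc]
    rw [ha1 P₂, ha2 P₁, l1, l2, l3]
    ring
  have hpos := trace_adjoint_comp_self_re_nonneg D
  rw [← Module.End.mul_eq_comp, ← hT, key, hMM] at hpos
  -- transfer the goal to * notation
  simp only [← Module.End.mul_eq_comp, ← hT]
  rw [hCC]
  simp only [Complex.sub_re, Complex.mul_re, Complex.ofReal_re, Complex.sub_im] at hpos ⊢
  norm_num at hpos ⊢
  linarith
end

section
/- Let ψ be a unit vector in ℂ^a ⊗ ℂ^b ⊗ ℂ^c (factors labeled P, Q, R), let ρ_{PQ} = Tr_R(|ψ⟩⟨ψ|) be the reduced state on ℂ^a ⊗ ℂ^b, and let Π be the orthogonal projection of ℂ^a ⊗ ℂ^b onto the range of ρ_{PQ}. Then ker(Tr_Q ρ_{PQ}) = ker(Tr_Q Π): the reduced state of ψ on the first factor and the partial trace over Q of the Schmidt-span projector Π have the same kernel. -/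
open scoped BigOperators Matrix

namespace Stab

/-- Partial trace over the third factor `R` of `ℂ^a ⊗ ℂ^b ⊗ ℂ^c`. -/
noncomputable def ptraceR {a b c : ℕ}
    (M : Matrix (Fin a × Fin b × Fin c) (Fin a × Fin b × Fin c) ℂ) :
    Matrix (Fin a × Fin b) (Fin a × Fin b) ℂ :=
  fun p q => ∑ k, M (p.1, p.2, k) (q.1, q.2, k)

/-- Partial trace over the second factor `Q` of `ℂ^a ⊗ ℂ^b`. -/
noncomputable def ptraceQ {a b : ℕ}
    (M : Matrix (Fin a × Fin b) (Fin a × Fin b) ℂ) : Matrix (Fin a) (Fin a) ℂ :=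
  fun i i' => ∑ j, M (i, j) (i', j)

open Matrix
open scoped ComplexOrder

lemma herm_mulVec_eq_zero_iff {n : Type*} [Fintype n]
    {A : Matrix n n ℂ} (hA : Aᴴ = A) (v : n → ℂ) :
    A *ᵥ v = 0 ↔ ∀ u ∈ LinearMap.range A.mulVecLin, star u ⬝ᵥ v = 0 := by
  have key : ∀ w, star (A *ᵥ w) ⬝ᵥ v = star w ⬝ᵥ (A *ᵥ v) := by
    intro w
    rw [star_mulVec, hA, ← dotProduct_mulVec]
  constructor
  · rintro h u ⟨w, rfl⟩
    rw [mulVecLin_apply, key, h, dotProduct_zero]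
  · intro h
    have := h _ ⟨A *ᵥ v, rfl⟩
    rw [mulVecLin_apply, key] at this
    exact dotProduct_star_self_eq_zero.mp this

lemma ker_eq_of_herm {n : Type*} [Fintype n] {A B : Matrix n n ℂ}
    (hA : Aᴴ = A) (hB : Bᴴ = B)
    (h : LinearMap.range A.mulVecLin = LinearMap.range B.mulVecLin) :
    LinearMap.ker A.mulVecLin = LinearMap.ker B.mulVecLin := by
  ext v
  simp only [LinearMap.mem_ker, mulVecLin_apply]
  rw [herm_mulVec_eq_zero_iff hA, herm_mulVec_eq_zero_iff hB, h]

lemma ptraceQ_mulVec_eq_zero_iff {a b : ℕ} {M : Matrix (Fin a × Fin b) (Fin a × Fin b) ℂ}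
    (hM : M.PosSemidef) (v : Fin a → ℂ) :
    ptraceQ M *ᵥ v = 0 ↔
      ∀ j : Fin b, M *ᵥ (fun p => if p.2 = j then v p.1 else 0) = 0 := by
  set w : Fin b → (Fin a × Fin b) → ℂ := fun j p => if p.2 = j then v p.1 else 0 with hw
  have hrow : ∀ i, (ptraceQ M *ᵥ v) i = ∑ j, (M *ᵥ w j) (i, j) := by
    intro i
    simp only [mulVec, dotProduct, ptraceQ, hw, Fintype.sum_prod_type, mul_ite, mul_zero,
      Finset.sum_ite_eq', Finset.mem_univ, if_true, Finset.sum_mul]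
    exact Finset.sum_comm
  have hquad : star v ⬝ᵥ (ptraceQ M *ᵥ v) = ∑ j, star (w j) ⬝ᵥ (M *ᵥ w j) := by
    calc star v ⬝ᵥ (ptraceQ M *ᵥ v) = ∑ i, star (v i) * ∑ j, (M *ᵥ w j) (i, j) := by
          simp only [dotProduct, Pi.star_apply, hrow]
      _ = ∑ j, ∑ i, star (v i) * (M *ᵥ w j) (i, j) := by
          simp_rw [Finset.mul_sum]; exact Finset.sum_comm
      _ = ∑ j, star (w j) ⬝ᵥ (M *ᵥ w j) := by
          refine Finset.sum_congr rfl fun j _ => ?_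
          simp only [dotProduct, Pi.star_apply, hw, Fintype.sum_prod_type, apply_ite star,
            star_zero, ite_mul, zero_mul, Finset.sum_ite_eq', Finset.mem_univ, if_true]
  constructor
  · intro h j
    have h0 : ∑ j, star (w j) ⬝ᵥ (M *ᵥ w j) = 0 := by rw [← hquad, h, dotProduct_zero]
    have hnn : ∀ j ∈ Finset.univ, (0 : ℂ) ≤ star (w j) ⬝ᵥ (M *ᵥ w j) :=
      fun j _ => hM.dotProduct_mulVec_nonneg (w j)
    have := (Finset.sum_eq_zero_iff_of_nonneg hnn).mp h0 j (Finset.mem_univ j)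
    exact (hM.dotProduct_mulVec_zero_iff (w j)).mp this
  · intro h
    funext i
    rw [hrow]
    exact Finset.sum_eq_zero fun j _ => by rw [show M *ᵥ w j = 0 from h j, Pi.zero_apply]

lemma posSemidef_ptraceR_proj {a b c : ℕ} (ψ : Fin a × Fin b × Fin c → ℂ) :
    (ptraceR (proj ψ)).PosSemidef := by
  have : ptraceR (proj ψ) =
      (Matrix.of fun (p : Fin a × Fin b) (k : Fin c) => ψ (p.1, p.2, k)) *
        (Matrix.of fun (p : Fin a × Fin b) (k : Fin c) => ψ (p.1, p.2, k))ᴴ := by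
    ext p q
    simp [ptraceR, proj, Matrix.mul_apply, Matrix.conjTranspose_apply, Complex.star_def]
  rw [this]
  exact posSemidef_self_mul_conjTranspose _

/-- Lemma 4, kernels of reduced state and Schmidt-span projector:
for a unit vector `ψ ∈ ℂ^a ⊗ ℂ^b ⊗ ℂ^c` with reduced state `ρ_{PQ} = Tr_R |ψ⟩⟨ψ|` and
`P` the orthogonal projection onto the range of `ρ_{PQ}`, the partial traces over `Q` of
`ρ_{PQ}` and of `P` have the same kernel. -/
theorem subsystem_kernel_eq_of_schmidt_projector {a b c : ℕ}
    (ψ : Fin a × Fin b × Fin c → ℂ) (hψ : ∑ x, Complex.normSq (ψ x) = 1)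
    (P : Matrix (Fin a × Fin b) (Fin a × Fin b) ℂ)
    (hP : IsOrthProjOnto P (LinearMap.range (ptraceR (proj ψ)).mulVecLin)) :
    LinearMap.ker (ptraceQ (ptraceR (proj ψ))).mulVecLin =
      LinearMap.ker (ptraceQ P).mulVecLin := by
  obtain ⟨h1, h2, h3⟩ := hP
  have hρ := posSemidef_ptraceR_proj ψ
  have hPpsd : P.PosSemidef := by
    have := Matrix.posSemidef_conjTranspose_mul_self P
    rwa [h1, h2] at this
  have hker : LinearMap.ker (ptraceR (proj ψ)).mulVecLin = LinearMap.ker P.mulVecLin :=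
    ker_eq_of_herm hρ.1 h1 h3.symm
  have hk : ∀ x, ptraceR (proj ψ) *ᵥ x = 0 ↔ P *ᵥ x = 0 := by
    intro x
    have := SetLike.ext_iff.mp hker x
    simpa [LinearMap.mem_ker, Matrix.mulVecLin_apply] using this
  ext v
  simp only [LinearMap.mem_ker, Matrix.mulVecLin_apply]
  rw [ptraceQ_mulVec_eq_zero_iff hρ v, ptraceQ_mulVec_eq_zero_iff hPpsd v]
  exact forall_congr' fun j => hk _

end Stab
end
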